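/- Let θ be a Cantor series such that every prime divides infinitely many of the b_n. Then θ is irrational if and only if both a_n > 0 holds for infinitely many n and a_n < b_n − 1 holds for infinitely many n. -/

import Mathlib

namespace CantorThmAux

def Pr (b : ℕ → ℤ) (n : ℕ) : ℤ := ∏ i ∈ Finset.range n, b (i+1)

noncomputable def fterm (a b : ℕ → ℤ) (n : ℕ) : ℝ := (a (n+1) : ℝ) / (Pr b (n+1) : ℝ)

lemma Pr_succ' (b : ℕ → ℤ) (n : ℕ) : Pr b (n+1) = Pr b n * b (n+1) := Finset.prod_range_succ _ _

lemma two_pow_le_Pr (b : ℕ → ℤ) (hb : ∀ n, 1 ≤ n → 2 ≤ b n) (n : ℕ) : 2 ^ n ≤ Pr b n := by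
  induction n with
  | zero => simp [Pr]
  | succ n ih =>
    rw [Pr_succ', pow_succ]
    have h1 : 2 ≤ b (n+1) := hb _ (by omega)
    have h2 : (0:ℤ) < Pr b n := lt_of_lt_of_le (by positivity) ih
    nlinarith

lemma Pr_pos (b : ℕ → ℤ) (hb : ∀ n, 1 ≤ n → 2 ≤ b n) (n : ℕ) : 0 < Pr b n :=
  lt_of_lt_of_le (by positivity) (two_pow_le_Pr b hb n)

lemma Pr_rpos (b : ℕ → ℤ) (hb : ∀ n, 1 ≤ n → 2 ≤ b n) (n : ℕ) : (0:ℝ) < (Pr b n : ℝ) := by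
  exact_mod_cast Pr_pos b hb n

lemma ub_eq (b : ℕ → ℤ) (hb : ∀ n, 1 ≤ n → 2 ≤ b n) (n : ℕ) :
    1/(Pr b n:ℝ) - 1/(Pr b (n+1):ℝ) = ((b (n+1):ℝ) - 1)/(Pr b (n+1):ℝ) := by
  have h2 : (0:ℝ) < (Pr b n : ℝ) := Pr_rpos b hb n
  have h4 : (Pr b (n+1) : ℝ) = (Pr b n : ℝ) * (b (n+1) : ℝ) := by
    rw [Pr_succ']; push_cast; ring
  have hbpos : (0:ℝ) < (b (n+1) : ℝ) := by
    have := hb (n+1) (by omega)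
    exact_mod_cast lt_of_lt_of_le (by norm_num) this
  rw [h4]
  field_simp

lemma fterm_nonneg (a b : ℕ → ℤ) (hb : ∀ n, 1 ≤ n → 2 ≤ b n)
    (ha : ∀ n, 1 ≤ n → 0 ≤ a n ∧ a n ≤ b n - 1) (n : ℕ) : 0 ≤ fterm a b n := by
  unfold fterm
  have h1 : (0:ℝ) ≤ (a (n+1) : ℝ) := by exact_mod_cast (ha (n+1) (by omega)).1
  have h2 := Pr_rpos b hb (n+1)
  positivity

lemma fterm_le (a b : ℕ → ℤ) (hb : ∀ n, 1 ≤ n → 2 ≤ b n)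
    (ha : ∀ n, 1 ≤ n → 0 ≤ a n ∧ a n ≤ b n - 1) (n : ℕ) :
    fterm a b n ≤ 1 / (Pr b n : ℝ) - 1 / (Pr b (n+1) : ℝ) := by
  have h5 : (a (n+1) : ℝ) ≤ (b (n+1) : ℝ) - 1 := by
    have := (ha (n+1) (by omega)).2; push_cast; exact_mod_cast this
  have h3 : (0:ℝ) < (Pr b (n+1) : ℝ) := Pr_rpos b hb (n+1)
  rw [fterm, ub_eq b hb n]
  gcongr

lemma one_div_Pr_le (b : ℕ → ℤ) (hb : ∀ n, 1 ≤ n → 2 ≤ b n) (n : ℕ) :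
    1 / (Pr b n : ℝ) ≤ ((1:ℝ)/2) ^ n := by
  have h2 : (2:ℝ)^n ≤ (Pr b n : ℝ) := by exact_mod_cast two_pow_le_Pr b hb n
  rw [div_pow, one_pow, div_le_div_iff₀ (Pr_rpos b hb n) (by positivity)]
  linarith

lemma fterm_le_inv (a b : ℕ → ℤ) (hb : ∀ n, 1 ≤ n → 2 ≤ b n)
    (ha : ∀ n, 1 ≤ n → 0 ≤ a n ∧ a n ≤ b n - 1) (n : ℕ) :
    fterm a b n ≤ ((1:ℝ)/2) ^ n := by
  have h := fterm_le a b hb ha n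
  have h1 : (0:ℝ) < 1 / (Pr b (n+1) : ℝ) := by
    have := Pr_rpos b hb (n+1); positivity
  have := one_div_Pr_le b hb n
  linarith

lemma fterm_summable (a b : ℕ → ℤ) (hb : ∀ n, 1 ≤ n → 2 ≤ b n)
    (ha : ∀ n, 1 ≤ n → 0 ≤ a n ∧ a n ≤ b n - 1) : Summable (fterm a b) :=
  Summable.of_nonneg_of_le (fterm_nonneg a b hb ha) (fterm_le_inv a b hb ha)
    (summable_geometric_of_lt_one (by norm_num) (by norm_num))

lemma telescope_hasSum (b : ℕ → ℤ) (hb : ∀ n, 1 ≤ n → 2 ≤ b n) (N : ℕ) :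
    HasSum (fun m => 1 / (Pr b (m+N) : ℝ) - 1 / (Pr b (m+N+1) : ℝ))
      (1 / (Pr b N : ℝ)) := by
  have hmono : ∀ n, Pr b n ≤ Pr b (n+1) := by
    intro n
    rw [Pr_succ']
    nlinarith [Pr_pos b hb n, hb (n+1) (by omega)]
  have hnn : ∀ m, 0 ≤ 1 / (Pr b (m+N) : ℝ) - 1 / (Pr b (m+N+1) : ℝ) := by
    intro m
    have h1 := Pr_rpos b hb (m+N)
    have h3 : (Pr b (m+N) : ℝ) ≤ (Pr b (m+N+1) : ℝ) := by exact_mod_cast hmono (m+N)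
    have := one_div_le_one_div_of_le h1 h3
    linarith
  have hsum : ∀ k, ∑ m ∈ Finset.range k,
      (1 / (Pr b (m+N) : ℝ) - 1 / (Pr b (m+N+1) : ℝ))
        = 1 / (Pr b N : ℝ) - 1 / (Pr b (k+N) : ℝ) := by
    intro k
    have := Finset.sum_range_sub' (f := fun m => 1 / (Pr b (m+N) : ℝ)) k
    simpa [add_right_comm] using this
  have htend : Filter.Tendsto (fun k => 1 / (Pr b (k+N) : ℝ)) Filter.atTop (nhds 0) := by
    have hg : Filter.Tendsto (fun k : ℕ => ((1:ℝ)/2) ^ k) Filter.atTop (nhds 0) :=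
      tendsto_pow_atTop_nhds_zero_of_lt_one (by norm_num) (by norm_num)
    refine squeeze_zero (fun k => by
      have := Pr_rpos b hb (k+N); positivity) (fun k => ?_) hg
    calc 1 / (Pr b (k+N) : ℝ) ≤ ((1:ℝ)/2) ^ (k+N) := one_div_Pr_le b hb (k+N)
    _ ≤ ((1:ℝ)/2) ^ k := pow_le_pow_of_le_one (by norm_num) (by norm_num) (by omega)
  rw [hasSum_iff_tendsto_nat_of_nonneg hnn]
  simp_rw [hsum]
  have : Filter.Tendsto (fun k => 1 / (Pr b N : ℝ) - 1 / (Pr b (k+N) : ℝ)) Filter.atTop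
      (nhds (1 / (Pr b N : ℝ) - 0)) := Filter.Tendsto.const_sub _ htend
  simpa using this

lemma exists_dvd_Pr (b : ℕ → ℤ)
    (hp : ∀ p : ℕ, p.Prime → {n : ℕ | 1 ≤ n ∧ (p : ℤ) ∣ b n}.Infinite) :
    ∀ q : ℕ, 0 < q → ∃ N, (q:ℤ) ∣ Pr b N := by
  intro q
  induction q using Nat.strong_induction_on with
  | _ q ih =>
    intro hq
    rcases eq_or_lt_of_le (show 1 ≤ q by omega) with h1 | h2
    · exact ⟨0, by simp [← h1]⟩
    · have hq2 : 2 ≤ q := h2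
      have hpp : q.minFac.Prime := Nat.minFac_prime (by omega)
      obtain ⟨q', hq'⟩ := Nat.minFac_dvd q
      have hple := hpp.two_le
      have hq'pos : 0 < q' := by
        rcases Nat.eq_zero_or_pos q' with h | h
        · rw [h, mul_zero] at hq'; omega
        · exact h
      have hq'lt : q' < q := by nlinarith
      obtain ⟨N0, hN0⟩ := ih q' hq'lt hq'pos
      obtain ⟨n, hn, hngt⟩ := (hp q.minFac hpp).exists_gt N0
      refine ⟨n, ?_⟩
      have hsplit : Pr b N0 * ∏ i ∈ Finset.Ico N0 n, b (i+1) = Pr b n := by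
        unfold Pr
        exact Finset.prod_range_mul_prod_Ico _ (le_of_lt hngt)
      have hmem : n - 1 ∈ Finset.Ico N0 n := by
        rw [Finset.mem_Ico]; omega
      have hpdvdprod : ((q.minFac : ℕ) : ℤ) ∣ ∏ i ∈ Finset.Ico N0 n, b (i+1) := by
        refine dvd_trans ?_ (Finset.dvd_prod_of_mem (fun i => b (i+1)) hmem)
        show (q.minFac : ℤ) ∣ b (n - 1 + 1)
        have h1 : n - 1 + 1 = n := by omega
        rw [h1]
        exact hn.2
      have heq : (q : ℤ) = (q' : ℤ) * (q.minFac : ℤ) := by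
        exact_mod_cast hq'.trans (Nat.mul_comm _ _)
      rw [heq, ← hsplit]
      exact mul_dvd_mul hN0 hpdvdprod

lemma tail_summable (a b : ℕ → ℤ) (hb : ∀ n, 1 ≤ n → 2 ≤ b n)
    (ha : ∀ n, 1 ≤ n → 0 ≤ a n ∧ a n ≤ b n - 1) (N : ℕ) :
    Summable (fun m => fterm a b (m + N)) :=
  (summable_nat_add_iff N).2 (fterm_summable a b hb ha)

lemma tail_pos (a b : ℕ → ℤ) (hb : ∀ n, 1 ≤ n → 2 ≤ b n)
    (ha : ∀ n, 1 ≤ n → 0 ≤ a n ∧ a n ≤ b n - 1)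
    (h1 : {n : ℕ | 1 ≤ n ∧ 0 < a n}.Infinite) (N : ℕ) :
    0 < ∑' m, fterm a b (m + N) := by
  obtain ⟨n, hn, hngt⟩ := h1.exists_gt N
  have hm : (n - N - 1) + N + 1 = n := by omega
  refine Summable.tsum_pos (tail_summable a b hb ha N) (fun m => fterm_nonneg a b hb ha _)
    (n - N - 1) ?_
  show (0:ℝ) < (a ((n - N - 1) + N + 1) : ℝ) / (Pr b ((n - N - 1) + N + 1) : ℝ)
  rw [hm]
  have h1 : (0:ℝ) < (a n : ℝ) := by exact_mod_cast hn.2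
  have h2 := Pr_rpos b hb n
  positivity

lemma tail_lt (a b : ℕ → ℤ) (hb : ∀ n, 1 ≤ n → 2 ≤ b n)
    (ha : ∀ n, 1 ≤ n → 0 ≤ a n ∧ a n ≤ b n - 1)
    (h2 : {n : ℕ | 1 ≤ n ∧ a n < b n - 1}.Infinite) (N : ℕ) :
    ∑' m, fterm a b (m + N) < 1 / (Pr b N : ℝ) := by
  obtain ⟨n, hn, hngt⟩ := h2.exists_gt N
  set m₀ := n - N - 1 with hm₀
  have hm : m₀ + N + 1 = n := by omega
  have hts := telescope_hasSum b hb N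
  rw [← hts.tsum_eq]
  refine Summable.tsum_lt_tsum (f := fun m => fterm a b (m + N))
    (fun m => fterm_le a b hb ha (m + N)) (i := m₀) ?_
    (tail_summable a b hb ha N) hts.summable
  show fterm a b (m₀ + N) < 1 / (Pr b (m₀+N) : ℝ) - 1 / (Pr b (m₀+N+1) : ℝ)
  rw [ub_eq b hb (m₀+N), fterm]
  rw [hm]
  have hlt : (a n : ℝ) < (b n : ℝ) - 1 := by
    have := hn.2; push_cast
    exact_mod_cast (by linarith : a n < b n - 1)
  have h3 := Pr_rpos b hb n
  gcongr

lemma theta_split (a b : ℕ → ℤ) (hb : ∀ n, 1 ≤ n → 2 ≤ b n)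
    (ha : ∀ n, 1 ≤ n → 0 ≤ a n ∧ a n ≤ b n - 1) (N : ℕ) :
    ∑' n, fterm a b n = (∑ n ∈ Finset.range N, fterm a b n) + ∑' m, fterm a b (m + N) :=
  (Summable.sum_add_tsum_nat_add N (fterm_summable a b hb ha)).symm

end CantorThmAux

open CantorThmAux

/-- Cantor's theorem: if every prime divides infinitely many b_n, then the
Cantor series θ is irrational iff a_n > 0 infinitely often and
a_n < b_n - 1 infinitely often. -/
theorem cantor_theorem (a b : ℕ → ℤ)
    (hb : ∀ n, 1 ≤ n → 2 ≤ b n)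
    (ha : ∀ n, 1 ≤ n → 0 ≤ a n ∧ a n ≤ b n - 1)
    (hp : ∀ p : ℕ, p.Prime → {n : ℕ | 1 ≤ n ∧ (p : ℤ) ∣ b n}.Infinite) :
    Irrational ((a 0 : ℝ) + ∑' n : ℕ,
        (a (n + 1) : ℝ) / ∏ i ∈ Finset.range (n + 1), (b (i + 1) : ℝ))
      ↔ ({n : ℕ | 1 ≤ n ∧ 0 < a n}.Infinite ∧
         {n : ℕ | 1 ≤ n ∧ a n < b n - 1}.Infinite) := by
  have hstmt : (fun n : ℕ => (a (n + 1) : ℝ) / ∏ i ∈ Finset.range (n + 1), (b (i + 1) : ℝ))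
      = fterm a b := by
    funext n
    rw [fterm]
    congr 1
    unfold Pr
    push_cast
    ring
  rw [hstmt]
  set x : ℝ := (a 0 : ℝ) + ∑' n, fterm a b n with hx
  constructor
  · -- irrational → both infinite
    intro hirr
    by_contra hcon
    rw [not_and_or] at hcon
    rcases hcon with hfin | hfin
    · -- a n = 0 eventually; x is rational
      rw [Set.not_infinite] at hfin
      obtain ⟨N, hNbd⟩ := hfin.bddAbove
      have hzero : ∀ m, m ∉ Finset.range (N+1) → fterm a b m = 0 := by
        intro m hm
        rw [Finset.mem_range] at hm
        have hm1 : N + 1 ≤ m := by omega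
        have haz : a (m+1) = 0 := by
          by_contra h
          have hpos : 0 < a (m+1) := lt_of_le_of_ne (ha (m+1) (by omega)).1 (Ne.symm h)
          have : m + 1 ≤ N := hNbd ⟨by omega, hpos⟩
          omega
        rw [fterm, haz]
        simp
      have hts : ∑' n, fterm a b n = ∑ n ∈ Finset.range (N+1), fterm a b n :=
        tsum_eq_sum hzero
      set rr : ℚ := (a 0 : ℚ) + ∑ n ∈ Finset.range (N+1), (a (n+1) : ℚ) / (Pr b (n+1) : ℚ)
        with hrr
      have : x = (rr : ℝ) := by
        rw [hx, hts, hrr]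
        push_cast
        rfl
      rw [this] at hirr
      exact (Rat.not_irrational rr) hirr
    · -- a n = b n - 1 eventually
      rw [Set.not_infinite] at hfin
      obtain ⟨N, hNbd⟩ := hfin.bddAbove
      have hful : ∀ m, a (m + N + 2) = b (m + N + 2) - 1 := by
        intro m
        by_contra h
        have hlt : a (m+N+2) < b (m+N+2) - 1 :=
          lt_of_le_of_ne (ha (m+N+2) (by omega)).2 h
        have : m + N + 2 ≤ N := hNbd ⟨by omega, hlt⟩
        omega
      have htail : ∑' m, fterm a b (m + (N+1)) = 1 / (Pr b (N+1) : ℝ) := by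
        rw [← (telescope_hasSum b hb (N+1)).tsum_eq]
        congr 1
        funext m
        rw [ub_eq b hb (m+(N+1)), fterm]
        have h1 : m + (N+1) + 1 = m + N + 2 := by omega
        rw [h1, hful m]
        push_cast
        ring_nf
      have hsplit := theta_split a b hb ha (N+1)
      set rr : ℚ := (a 0 : ℚ) + ((∑ n ∈ Finset.range (N+1), (a (n+1) : ℚ) / (Pr b (n+1) : ℚ))
        + 1 / (Pr b (N+1) : ℚ)) with hrr
      have : x = (rr : ℝ) := by
        rw [hx, hsplit, htail, hrr]
        push_cast
        rfl
      rw [this] at hirr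
      exact (Rat.not_irrational rr) hirr
  · -- both infinite → irrational
    rintro ⟨h1, h2⟩
    rintro ⟨r, hr⟩
    obtain ⟨N, hN⟩ := exists_dvd_Pr b hp r.den r.pos
    obtain ⟨k, hk⟩ := hN
    -- the integer part
    set Z : ℤ := Pr b N * a 0 + ∑ n ∈ Finset.range N,
      a (n+1) * ∏ i ∈ Finset.Ico (n+1) N, b (i+1) with hZ
    set T : ℝ := (Pr b N : ℝ) * ∑' m, fterm a b (m + N) with hT
    have hterm : ∀ n ∈ Finset.range N, (Pr b N : ℝ) * fterm a b n
        = ((a (n+1) * ∏ i ∈ Finset.Ico (n+1) N, b (i+1) : ℤ) : ℝ) := by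
      intro n hn
      rw [Finset.mem_range] at hn
      have hsp : Pr b (n+1) * ∏ i ∈ Finset.Ico (n+1) N, b (i+1) = Pr b N := by
        unfold Pr
        exact Finset.prod_range_mul_prod_Ico _ hn
      have hne : (Pr b (n+1) : ℝ) ≠ 0 := (Pr_rpos b hb (n+1)).ne'
      rw [fterm, ← hsp]
      push_cast
      field_simp
    have hxval : (Pr b N : ℝ) * x = (Z : ℝ) + T := by
      rw [hx, theta_split a b hb ha N, hZ]
      rw [mul_add, mul_add, Finset.mul_sum]
      rw [Finset.sum_congr rfl hterm]
      push_cast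
      ring
    have hrval : (Pr b N : ℝ) * x = ((k * r.num : ℤ) : ℝ) := by
      rw [← hr]
      have hden : (r.den : ℝ) * (r : ℝ) = (r.num : ℝ) := by
        rw [Rat.cast_def]
        have : (r.den : ℝ) ≠ 0 := by
          exact_mod_cast (Nat.cast_ne_zero (R := ℝ)).2 r.den_nz
        field_simp
      have hkr : (Pr b N : ℝ) = (r.den : ℝ) * (k : ℝ) := by
        exact_mod_cast congrArg (fun z : ℤ => (z : ℝ)) hk
      rw [hkr]
      push_cast
      rw [mul_assoc, mul_comm (k:ℝ) (r:ℝ), ← mul_assoc, hden]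
      ring
    have hTpos : 0 < T := by
      rw [hT]
      exact mul_pos (Pr_rpos b hb N) (tail_pos a b hb ha h1 N)
    have hTlt : T < 1 := by
      rw [hT]
      have := tail_lt a b hb ha h2 N
      have hP := Pr_rpos b hb N
      calc (Pr b N : ℝ) * ∑' m, fterm a b (m + N)
          < (Pr b N : ℝ) * (1 / (Pr b N : ℝ)) := by
            exact mul_lt_mul_of_pos_left this hP
        _ = 1 := by field_simp
    have hTint : T = ((k * r.num - Z : ℤ) : ℝ) := by
      have h3 : ((k * r.num : ℤ) : ℝ) = (Z : ℝ) + T := hrval.symm.trans hxval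
      push_cast at h3 ⊢
      linarith
    rw [hTint] at hTpos hTlt
    have h01 : (0:ℤ) < k * r.num - Z := by exact_mod_cast hTpos
    have h02 : k * r.num - Z < 1 := by exact_mod_cast hTlt
    omega
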